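/- Let Σ be an n×n symmetric positive-definite real matrix, X an n×p real matrix of full column rank with p < n, and define M := Σ⁻¹ − Σ⁻¹X(XᴴΣ⁻¹X)⁻¹XᴴΣ⁻¹. Let U be an n×(n−p) matrix whose columns form an orthonormal basis of im(X)^⊥. Then pdet(M) = det(UᴴΣU)⁻¹, i.e., the pseudo-determinant of M equals the reciprocal of the determinant of the compression of Σ onto im(X)^⊥. -/

import Mathlib

open Matrix
open scoped Classical

/-- The pseudo-determinant of a real square matrix: the product of the nonzero
eigenvalues (roots over `ℂ` of the characteristic polynomial of `M`, with
algebraic multiplicity); the empty product is `1`. -/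
noncomputable def pdetR {n : ℕ} (M : Matrix (Fin n) (Fin n) ℝ) : ℂ :=
  (((M.map (Complex.ofReal)).charpoly.roots).filter (fun z => z ≠ 0)).prod

open Polynomial in
lemma eval_charpoly_cx {k : ℕ} (A : Matrix (Fin k) (Fin k) ℂ) (r : ℂ) :
    A.charpoly.eval r = (r • (1 : Matrix (Fin k) (Fin k) ℂ) - A).det := by
  rw [Matrix.charpoly, _root_.eval_det, matPolyEquiv_charmatrix, eval_sub, eval_X, eval_C]
  congr 2
  ext i j
  simp [Matrix.scalar_apply, Matrix.diagonal_apply, Matrix.one_apply, mul_ite]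

/-- Positive definiteness is preserved by conjugation with an injective matrix. -/
lemma posDef_conj_aux {n m : ℕ} {A : Matrix (Fin n) (Fin n) ℝ} (hA : A.PosDef)
    (B : Matrix (Fin n) (Fin m) ℝ) (hB : Function.Injective B.mulVec) :
    (Bᴴ * A * B).PosDef := by
  refine Matrix.PosDef.of_dotProduct_mulVec_pos ?_ ?_
  · have h := hA.isHermitian
    unfold Matrix.IsHermitian at h ⊢
    rw [Matrix.conjTranspose_mul, Matrix.conjTranspose_mul,
      Matrix.conjTranspose_conjTranspose, h, Matrix.mul_assoc]
  · intro x hx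
    have hBx : B *ᵥ x ≠ 0 := by
      intro h
      exact hx (hB (h.trans (Matrix.mulVec_zero B).symm))
    have h := hA.dotProduct_mulVec_pos hBx
    calc (0:ℝ) < star (B *ᵥ x) ⬝ᵥ A *ᵥ (B *ᵥ x) := h
      _ = star x ⬝ᵥ (Bᴴ * A * B) *ᵥ x := by
          rw [← Matrix.mulVec_mulVec, ← Matrix.mulVec_mulVec,
            Matrix.dotProduct_mulVec (star x), ← Matrix.star_mulVec,
            Matrix.dotProduct_mulVec (star (B *ᵥ x))]

open Polynomial in
/-- Product of the nonzero roots of the characteristic polynomial of `W * B * Wᴴ`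
equals `det B` when `Wᴴ * W = 1` and `B` is invertible. -/
lemma pdet_conj_aux {N q : ℕ} (hq : q ≤ N) (W : Matrix (Fin N) (Fin q) ℂ)
    (B : Matrix (Fin q) (Fin q) ℂ) (hW : Wᴴ * W = 1) (hB : B.det ≠ 0) :
    (((W * B * Wᴴ).charpoly.roots).filter (fun z => z ≠ 0)).prod = B.det := by
  have hchar : (W * B * Wᴴ).charpoly = X ^ (N - q) * B.charpoly := by
    apply Polynomial.eq_of_infinite_eval_eq
    refine Set.Infinite.mono ?_ ((Set.finite_singleton (0:ℂ)).infinite_compl)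
    intro x hx
    simp only [Set.mem_compl_iff, Set.mem_singleton_iff] at hx
    show eval x _ = eval x _
    rw [eval_charpoly_cx, eval_mul, eval_pow, eval_X, eval_charpoly_cx]
    have key : ∀ k : ℕ, ∀ C : Matrix (Fin k) (Fin k) ℂ,
        x • (1 : Matrix (Fin k) (Fin k) ℂ) - C = x • (1 - x⁻¹ • C) := by
      intro k C
      rw [smul_sub, smul_smul, mul_inv_cancel₀ hx, one_smul]
    have h1 : W * ((x⁻¹ • B) * Wᴴ) = x⁻¹ • (W * B * Wᴴ) := by
      rw [Matrix.smul_mul, Matrix.mul_smul, Matrix.mul_assoc]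
    have h2 : det ((1 : Matrix (Fin N) (Fin N) ℂ) - x⁻¹ • (W * B * Wᴴ))
        = det ((1 : Matrix (Fin q) (Fin q) ℂ) - x⁻¹ • B) := by
      rw [← h1, sub_eq_add_neg, ← Matrix.mul_neg, ← Matrix.neg_mul,
        Matrix.det_one_add_mul_comm, Matrix.mul_assoc, hW,
        Matrix.mul_one, ← sub_eq_add_neg]
    rw [key, key, Matrix.det_smul, Matrix.det_smul, Fintype.card_fin, Fintype.card_fin, h2,
      ← mul_assoc, ← pow_add, Nat.sub_add_cancel hq]
  rw [hchar]
  have hm : B.charpoly.Monic := B.charpoly_monic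
  have hne : (X : ℂ[X]) ^ (N - q) * B.charpoly ≠ 0 :=
    mul_ne_zero (pow_ne_zero _ X_ne_zero) hm.ne_zero
  have hc0 : B.charpoly.coeff 0 ≠ 0 := by
    intro h
    apply hB
    rw [Matrix.det_eq_sign_charpoly_coeff, h, mul_zero]
  rw [Polynomial.roots_mul hne, Polynomial.roots_pow, Polynomial.roots_X,
    Multiset.filter_add]
  have h1 : Multiset.filter (fun z => z ≠ 0) ((N - q) • ({0} : Multiset ℂ)) = 0 := by
    rw [Multiset.filter_eq_nil]
    intro a ha
    rw [Multiset.nsmul_singleton, Multiset.mem_replicate] at ha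
    simp [ha.2]
  have h2 : Multiset.filter (fun z => z ≠ 0) B.charpoly.roots = B.charpoly.roots := by
    rw [Multiset.filter_eq_self]
    intro a ha
    intro ha0
    subst ha0
    exact hc0 (by simpa [Polynomial.coeff_zero_eq_eval_zero] using
      Polynomial.isRoot_of_mem_roots ha)
  rw [h1, h2, zero_add]
  have hs : B.charpoly.Splits := IsAlgClosed.splits _
  have hp := hs.coeff_zero_eq_prod_roots_of_monic hm
  rw [Matrix.det_eq_sign_charpoly_coeff, hp, Matrix.charpoly_natDegree_eq_dim,
    Fintype.card_fin, ← mul_assoc, ← pow_add, Even.neg_one_pow ⟨q, (two_mul q).symm ▸ rfl⟩,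
    one_mul]

lemma map_mul_cx {a b c : ℕ} (P : Matrix (Fin a) (Fin b) ℝ) (Q : Matrix (Fin b) (Fin c) ℝ) :
    (P * Q).map Complex.ofReal = P.map Complex.ofReal * Q.map Complex.ofReal := by
  ext i j
  simp [Matrix.map_apply, Matrix.mul_apply]

/-- For SPD `Σ`, full-column-rank `X` (`p < n`),
`M = Σ⁻¹ − Σ⁻¹X(XᴴΣ⁻¹X)⁻¹XᴴΣ⁻¹`, and `U` an orthonormal basis matrix of `(im X)ᗮ`,
`pdet M = det (Uᴴ Σ U)⁻¹`. -/
theorem stmt17 {n p : ℕ}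
    (S : Matrix (Fin n) (Fin n) ℝ) (hS : S.PosDef)
    (X : Matrix (Fin n) (Fin p) ℝ) (hX : X.rank = p) (hpn : p < n)
    (M : Matrix (Fin n) (Fin n) ℝ)
    (hM : M = S⁻¹ - S⁻¹ * X * (Xᴴ * S⁻¹ * X)⁻¹ * Xᴴ * S⁻¹)
    (U : Matrix (Fin n) (Fin (n - p)) ℝ) (hU : Uᴴ * U = 1)
    (hUrange : LinearMap.range (Matrix.toEuclideanLin U) =
      (LinearMap.range (Matrix.toEuclideanLin X))ᗮ) :
    pdetR M = (((Uᴴ * S * U).det : ℝ) : ℂ)⁻¹ := by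
  -- basic positivity / invertibility facts
  have hSd : IsUnit S.det := isUnit_iff_ne_zero.2 hS.det_pos.ne'
  have hSinv : (S⁻¹).PosDef := hS.inv
  have hXinj : Function.Injective X.mulVec := by
    have h := X.mulVecLin.finrank_range_add_finrank_ker
    rw [Matrix.rank] at hX
    rw [hX, Module.finrank_fintype_fun_eq_card, Fintype.card_fin] at h
    have hker : LinearMap.ker X.mulVecLin = ⊥ :=
      Submodule.finrank_eq_zero.mp (by omega)
    exact LinearMap.ker_eq_bot.mp hker
  have hUinj : Function.Injective U.mulVec := by
    intro a b hab
    have h := congrArg (Uᴴ.mulVec) hab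
    rwa [Matrix.mulVec_mulVec, Matrix.mulVec_mulVec, hU, Matrix.one_mulVec,
      Matrix.one_mulVec] at h
  have hG : (Xᴴ * S⁻¹ * X).PosDef := posDef_conj_aux hSinv X hXinj
  have hUSU : (Uᴴ * S * U).PosDef := posDef_conj_aux hS U hUinj
  have hGd : IsUnit (Xᴴ * S⁻¹ * X).det := isUnit_iff_ne_zero.2 hG.det_pos.ne'
  have hUSUd : IsUnit (Uᴴ * S * U).det := isUnit_iff_ne_zero.2 hUSU.det_pos.ne'
  -- `Uᴴ * X = 0`
  have hUX : Uᴴ * X = 0 := by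
    ext i j
    have hx : (Matrix.toEuclideanLin X) ((WithLp.equiv 2 (Fin p → ℝ)).symm (Pi.single j 1)) ∈
        LinearMap.range (Matrix.toEuclideanLin X) := LinearMap.mem_range_self _ _
    have hu : (Matrix.toEuclideanLin U)
        ((WithLp.equiv 2 (Fin (n - p) → ℝ)).symm (Pi.single i 1)) ∈
        (LinearMap.range (Matrix.toEuclideanLin X))ᗮ := by
      rw [← hUrange]; exact LinearMap.mem_range_self _ _
    have h0 := (Submodule.mem_orthogonal _ _).mp hu _ hx
    rw [WithLp.equiv_symm_apply, WithLp.equiv_symm_apply, Matrix.toLpLin_toLp, Matrix.toLpLin_toLp] at h0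
    simp only [PiLp.inner_apply, RCLike.inner_apply, starRingEnd_apply, star_trivial,
      PiLp.toLp_apply, Matrix.toLin'_apply, Matrix.mulVec_single, mul_one,
      MulOpposite.op_one, one_smul, Matrix.col_apply] at h0
    simp only [Matrix.mul_apply, Matrix.conjTranspose_apply, star_trivial, Matrix.zero_apply]
    calc ∑ k, U k i * X k j = ∑ k, X k j * U k i := by
          exact Finset.sum_congr rfl fun k _ => mul_comm _ _
      _ = 0 := by rw [← h0]; exact Finset.sum_congr rfl fun k _ => mul_comm _ _
  have hXU : Xᴴ * U = 0 := by
    have h := congrArg Matrix.conjTranspose hUX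
    rwa [Matrix.conjTranspose_mul, Matrix.conjTranspose_conjTranspose,
      Matrix.conjTranspose_zero] at h
  set B : Matrix (Fin (n - p)) (Fin (n - p)) ℝ := (Uᴴ * S * U)⁻¹ with hBdef
  have hBmul : B * (Uᴴ * S * U) = 1 := Matrix.nonsing_inv_mul _ hUSUd
  -- the four products
  have hMX : M * X = 0 := by
    have h1 : (Xᴴ * (S⁻¹ * X))⁻¹ * (Xᴴ * (S⁻¹ * X)) = 1 := by
      have hassoc : Xᴴ * (S⁻¹ * X) = Xᴴ * S⁻¹ * X := (Matrix.mul_assoc _ _ _).symm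
      rw [hassoc]; exact Matrix.nonsing_inv_mul _ hGd
    rw [hM, Matrix.sub_mul]
    simp only [Matrix.mul_assoc]
    rw [h1, Matrix.mul_one, sub_self]
  have hMSU : M * (S * U) = U := by
    have hSS : S⁻¹ * (S * U) = U := by
      rw [← Matrix.mul_assoc, Matrix.nonsing_inv_mul _ hSd, Matrix.one_mul]
    rw [hM, Matrix.sub_mul]
    simp only [Matrix.mul_assoc]
    rw [hSS, hXU, Matrix.mul_zero, Matrix.mul_zero, Matrix.mul_zero, sub_zero]
  have hRX : (U * B * Uᴴ) * X = 0 := by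
    simp only [Matrix.mul_assoc]
    rw [hUX, Matrix.mul_zero, Matrix.mul_zero]
  have hRSU : (U * B * Uᴴ) * (S * U) = U := by
    have h1 : Uᴴ * (S * U) = Uᴴ * S * U := (Matrix.mul_assoc _ _ _).symm
    simp only [Matrix.mul_assoc]
    rw [h1, hBmul, Matrix.mul_one]
  -- the block matrix `A = [X | S*U]` is invertible on the right
  set A : Matrix (Fin n) (Fin p ⊕ Fin (n - p)) ℝ := Matrix.fromCols X (S * U) with hA
  have hInj : Function.Injective (Matrix.toLin' A) := by
    rw [← LinearMap.ker_eq_bot, LinearMap.ker_eq_bot']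
    intro v hv
    have hv' : X *ᵥ (v ∘ Sum.inl) + (S * U) *ᵥ (v ∘ Sum.inr) = 0 := by
      rw [← Matrix.fromCols_mulVec_sumElim, Sum.elim_comp_inl_inr]
      exact hv
    have h2 := congrArg (Uᴴ.mulVec) hv'
    rw [Matrix.mulVec_add, Matrix.mulVec_mulVec, Matrix.mulVec_mulVec, hUX,
      Matrix.zero_mulVec, zero_add, Matrix.mulVec_zero, ← Matrix.mul_assoc] at h2
    have hv2 : v ∘ Sum.inr = 0 := by
      have hinj2 : Function.Injective (Uᴴ * S * U).mulVec :=
        Matrix.mulVec_injective_iff_isUnit.2 ((Matrix.isUnit_iff_isUnit_det _).2 hUSUd)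
      apply hinj2
      rw [h2, Matrix.mulVec_zero]
    have hv1 : v ∘ Sum.inl = 0 := by
      apply hXinj
      rw [Matrix.mulVec_zero]
      rw [hv2, Matrix.mulVec_zero, add_zero] at hv'
      exact hv'
    funext s
    cases s with
    | inl a => exact congrFun hv1 a
    | inr a => exact congrFun hv2 a
  have hfr : Module.finrank ℝ ((Fin p ⊕ Fin (n - p)) → ℝ) = Module.finrank ℝ (Fin n → ℝ) := by
    rw [Module.finrank_fintype_fun_eq_card, Module.finrank_fintype_fun_eq_card,
      Fintype.card_sum, Fintype.card_fin, Fintype.card_fin, Fintype.card_fin]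
    omega
  have hbij : Function.Bijective (Matrix.toLin' A) :=
    ⟨hInj, (LinearMap.injective_iff_surjective_of_finrank_eq_finrank hfr).mp hInj⟩
  obtain ⟨C, hC⟩ : ∃ C : Matrix (Fin p ⊕ Fin (n - p)) (Fin n) ℝ,
      A * C = (1 : Matrix (Fin n) (Fin n) ℝ) := by
    let e := LinearEquiv.ofBijective (Matrix.toLin' A) hbij
    refine ⟨LinearMap.toMatrix' (e.symm : (Fin n → ℝ) →ₗ[ℝ] ((Fin p ⊕ Fin (n - p)) → ℝ)), ?_⟩
    apply Matrix.toLin'.injective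
    rw [Matrix.toLin'_mul, Matrix.toLin'_toMatrix', Matrix.toLin'_one]
    refine LinearMap.ext fun x => ?_
    exact e.apply_symm_apply x
  have hMB : M = U * B * Uᴴ := by
    have hMA : M * A = (U * B * Uᴴ) * A := by
      rw [hA, Matrix.mul_fromCols, Matrix.mul_fromCols, hMX, hMSU, hRX, hRSU]
    calc M = M * (A * C) := by rw [hC, Matrix.mul_one]
      _ = (M * A) * C := by rw [Matrix.mul_assoc]
      _ = ((U * B * Uᴴ) * A) * C := by rw [hMA]
      _ = (U * B * Uᴴ) * (A * C) := by rw [Matrix.mul_assoc]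
      _ = U * B * Uᴴ := by rw [hC, Matrix.mul_one]
  -- pass to ℂ
  have hmap : M.map Complex.ofReal =
      (U.map Complex.ofReal) * (B.map Complex.ofReal) * (U.map Complex.ofReal)ᴴ := by
    have hUc : (Uᴴ).map Complex.ofReal = (U.map Complex.ofReal)ᴴ :=
      Matrix.conjTranspose_map Complex.ofReal fun r => by
        simp [Complex.conj_ofReal]
    rw [hMB, ← hUc, map_mul_cx, map_mul_cx]
  have hUcU : (U.map Complex.ofReal)ᴴ * (U.map Complex.ofReal) = 1 := by
    have hUc : (Uᴴ).map Complex.ofReal = (U.map Complex.ofReal)ᴴ :=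
      Matrix.conjTranspose_map Complex.ofReal fun r => by
        simp [Complex.conj_ofReal]
    rw [← hUc, ← map_mul_cx, hU]
    exact Matrix.map_one _ Complex.ofReal_zero Complex.ofReal_one
  have hdetB : B.det = ((Uᴴ * S * U).det)⁻¹ := by
    rw [hBdef, Matrix.det_nonsing_inv, Ring.inverse_eq_inv']
  have hdetBc : (B.map Complex.ofReal).det = (((Uᴴ * S * U).det : ℝ) : ℂ)⁻¹ := by
    have h1 : (B.map Complex.ofReal).det = ((B.det : ℝ) : ℂ) :=
      (RingHom.map_det Complex.ofRealHom B).symm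
    rw [h1, hdetB, Complex.ofReal_inv]
  have hdetBc_ne : (B.map Complex.ofReal).det ≠ 0 := by
    rw [hdetBc]
    exact inv_ne_zero (by exact_mod_cast hUSU.det_pos.ne')
  unfold pdetR
  rw [hmap, pdet_conj_aux (Nat.sub_le n p) _ _ hUcU hdetBc_ne, hdetBc]
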